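/- For each finite coloring of the direct sum ⊕_n ℤ/2 (the countable direct sum of copies of ℤ/2ℤ), there is an infinite subgroup H such that H \ {0} is monochromatic. -/

import Mathlib

open Hindman Finset

/-- Every element of an FS-set is a sum of a nonempty finite subset of the stream. -/
lemma FS_exists_finset_sum {M} [AddCommMonoid M] {a : Stream' M} {m : M} (h : m ∈ FS a) :
    ∃ s : Finset ℕ, s.Nonempty ∧ m = ∑ i ∈ s, a.get i := by
  induction h with
  | head' a => exact ⟨{0}, ⟨0, by simp⟩, by simp [Stream'.head]⟩
  | tail' a m h ih =>
    obtain ⟨s, hs, rfl⟩ := ih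
    refine ⟨s.image (· + 1), hs.image _, ?_⟩
    rw [Finset.sum_image (by intro x _ y _ h; simpa using h)]
    simp [Stream'.get_tail]
  | cons' a m h ih =>
    obtain ⟨s, hs, rfl⟩ := ih
    refine ⟨insert 0 (s.image (· + 1)), insert_nonempty _ _, ?_⟩
    rw [Finset.sum_insert (by simp), Finset.sum_image (by intro x _ y _ h; simpa using h)]
    simp [Stream'.get_tail, Stream'.head]

lemma directSum_zmod2_add_self (x : DirectSum ℕ (fun _ => ZMod 2)) : x + x = 0 := by
  refine DFunLike.ext _ _ fun n => ?_
  have : ∀ a : ZMod 2, a + a = 0 := by decide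
  exact (DFinsupp.add_apply x x n).trans (this (x n))

/-- For each finite coloring of the direct sum `⊕ₙ ℤ/2`, there is an infinite
subgroup `H` with `H \ {0}` monochromatic. -/
theorem directSum_zmod2_mono_subgroup (C : Type*) [Finite C]
    (c : DirectSum ℕ (fun _ => ZMod 2) → C) :
    ∃ H : AddSubgroup (DirectSum ℕ (fun _ => ZMod 2)), Infinite H ∧
      ∃ col : C, ∀ x ∈ H, x ≠ 0 → c x = col := by
  classical
  have h2 : ∀ x : DirectSum ℕ (fun _ => ZMod 2), x + x = 0 := directSum_zmod2_add_self
  -- the stream of basis vectors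
  set a : Stream' (DirectSum ℕ (fun _ => ZMod 2)) := fun n => DirectSum.of (fun _ : ℕ => ZMod 2) n 1 with ha
  -- elements of FS a are nonzero
  have hFSa : ∀ x ∈ FS a, x ≠ 0 := by
    intro x hx
    obtain ⟨S, ⟨j, hj⟩, rfl⟩ := FS_exists_finset_sum hx
    intro h0
    have : (∑ i ∈ S, a.get i) j = 1 := by
      show (∑ i ∈ S, DirectSum.of (fun _ : ℕ => ZMod 2) i 1) j = 1
      rw [DFinsupp.finset_sum_apply, Finset.sum_eq_single j]
      · simp
      · intro i _ hij; simp [DirectSum.of_apply, hij]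
      · exact fun h => absurd hj h
    rw [h0] at this
    simp at this
  -- apply Hindman's theorem
  obtain ⟨cl, ⟨col, rfl⟩, b, hb⟩ :=
    FS_partition_regular a (Set.range fun col => c ⁻¹' {col} ∩ FS a)
      (Set.finite_range _)
      (fun x hx => ⟨c ⁻¹' {c x} ∩ FS a, ⟨c x, rfl⟩, rfl, hx⟩)
  have hbcol : ∀ x ∈ FS b, c x = col := fun x hx => (hb hx).1
  have hbne : ∀ x ∈ FS b, x ≠ 0 := fun x hx => hFSa x (hb hx).2
  -- every element of the closure of the range of b is a finite subset sum of b
  have key : ∀ y ∈ AddSubgroup.closure (Set.range b.get),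
      ∃ S : Finset ℕ, y = ∑ i ∈ S, b.get i := by
    intro y hy
    induction hy using AddSubgroup.closure_induction with
    | mem z hz => obtain ⟨n, rfl⟩ := hz; exact ⟨{n}, by simp⟩
    | zero => exact ⟨∅, by simp⟩
    | add z w hz hw ihz ihw =>
      obtain ⟨S, rfl⟩ := ihz
      obtain ⟨T, rfl⟩ := ihw
      refine ⟨symmDiff S T, ?_⟩
      have hd : Disjoint (symmDiff S T) (S ∩ T) := by
        simpa [Finset.inf_eq_inter] using (disjoint_symmDiff_inf S T)
      have hu : symmDiff S T ∪ S ∩ T = S ∪ T := by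
        simpa [Finset.sup_eq_union, Finset.inf_eq_inter] using (symmDiff_sup_inf S T)
      calc (∑ i ∈ S, b.get i) + ∑ i ∈ T, b.get i
          = (∑ i ∈ S ∪ T, b.get i) + ∑ i ∈ S ∩ T, b.get i := by
            rw [Finset.sum_union_inter]
        _ = ((∑ i ∈ symmDiff S T, b.get i) + ∑ i ∈ S ∩ T, b.get i) + ∑ i ∈ S ∩ T, b.get i := by
            rw [← hu, Finset.sum_union hd]
        _ = ∑ i ∈ symmDiff S T, b.get i := by rw [add_assoc, h2 _, add_zero]
    | neg z hz ih =>
      obtain ⟨S, rfl⟩ := ih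
      exact ⟨S, neg_eq_of_add_eq_zero_left (h2 _)⟩
  refine ⟨AddSubgroup.closure (Set.range b.get), ?_, col, ?_⟩
  · -- infinitude via strictly increasing partial sums
    set f : ℕ → DirectSum ℕ (fun _ => ZMod 2) := fun n => ∑ i ∈ Finset.range (n + 1), b.get i with hf
    have hfmem : ∀ n, f n ∈ AddSubgroup.closure (Set.range b.get) := fun n =>
      sum_mem fun i _ => AddSubgroup.subset_closure ⟨i, rfl⟩
    have hlt : ∀ m n : ℕ, m < n → f m ≠ f n := by
      intro m n hmn heq
      have hsplit : f m + ∑ i ∈ Finset.Ico (m + 1) (n + 1), b.get i = f n := by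
        rw [hf]
        simp only [Finset.range_eq_Ico]
        exact Finset.sum_Ico_consecutive _ (by omega) (by omega)
      rw [← heq] at hsplit
      have ht : (∑ i ∈ Finset.Ico (m + 1) (n + 1), b.get i) = 0 :=
        add_eq_left.mp hsplit
      exact hbne _ (FS.finset_sum b _ (Finset.nonempty_Ico.2 (by omega))) ht
    have hinj : Function.Injective
        (fun n => (⟨f n, hfmem n⟩ : AddSubgroup.closure (Set.range b.get))) := by
      intro m n h
      have h' : f m = f n := congrArg Subtype.val h
      rcases lt_trichotomy m n with h1 | h1 | h1
      · exact absurd h' (hlt _ _ h1)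
      · exact h1
      · exact absurd h'.symm (hlt _ _ h1)
    exact Infinite.of_injective _ hinj
  · intro x hx hx0
    obtain ⟨S, rfl⟩ := key x hx
    rcases S.eq_empty_or_nonempty with rfl | hS
    · simp at hx0
    · exact hbcol _ (FS.finset_sum b S hS)
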